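/- (Lemma 5.1, osp(2m+1|2)) If λ ∈ 𝒫 with λ₀ ≤ m−1, then λ ∼ λ^{j,q} for every 0 ≤ j ≤ λ₀ and every q ∈ ℤ. -/

import Mathlib

open Finset
open Fin.NatCast

/-- The standard basis vector `ε_i` of `ℚ^{1+m}` (with `ε_0 = δ`). -/
noncomputable def eps (m i : ℕ) : Fin (m+1) → ℚ := Pi.single (i : Fin (m+1)) 1

/-- The bilinear form `⟨λ, μ⟩ = −λ₀μ₀ + Σ_{i=1}^m λ_i μ_i` on `ℚ^{1+m}`. -/
noncomputable def form (m : ℕ) (l μ : Fin (m+1) → ℚ) : ℚ :=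
  -(l 0 * μ 0) + ∑ i : Fin (m+1), (if i = 0 then 0 else l i * μ i)

/-- `ρ` for `osp(2m|2)`: `ρ₀ = 1−m`, `ρ_i = m−i`. -/
noncomputable def rhoD (m : ℕ) : Fin (m+1) → ℚ :=
  fun i => if i = 0 then 1 - (m : ℚ) else (m : ℚ) - (i : ℕ)

/-- `ρ` for `osp(2m+1|2)`: `ρ₀ = 1/2−m`, `ρ_i = m−i+1/2`. -/
noncomputable def rhoB (m : ℕ) : Fin (m+1) → ℚ :=
  fun i => if i = 0 then 1/2 - (m : ℚ) else (m : ℚ) - (i : ℕ) + 1/2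

/-- All coordinates are integers. -/
def IsIntegralWt (m : ℕ) (l : Fin (m+1) → ℚ) : Prop := ∀ i, ∃ z : ℤ, l i = z

/-- Dominant integral weights for `osp(2m|2)`. -/
def PD (m : ℕ) (l : Fin (m+1) → ℚ) : Prop :=
  IsIntegralWt m l ∧ 0 ≤ l 0 ∧
  (∀ i j : ℕ, 1 ≤ i → i ≤ j → j ≤ m - 1 → l (j : Fin (m+1)) ≤ l (i : Fin (m+1))) ∧
  |l (m : Fin (m+1))| ≤ l ((m - 1 : ℕ) : Fin (m+1)) ∧
  (∀ i : ℕ, 1 ≤ i → i ≤ m - 1 → 0 ≤ l (i : Fin (m+1))) ∧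
  (∀ i : ℕ, 1 ≤ i → i ≤ m → l 0 < (i : ℚ) → l (i : Fin (m+1)) = 0)

/-- Dominant integral weights for `osp(2m+1|2)`. -/
def PB (m : ℕ) (l : Fin (m+1) → ℚ) : Prop :=
  IsIntegralWt m l ∧ 0 ≤ l 0 ∧
  (∀ i j : ℕ, 1 ≤ i → i ≤ j → j ≤ m → l (j : Fin (m+1)) ≤ l (i : Fin (m+1))) ∧
  (∀ i : ℕ, 1 ≤ i → i ≤ m → 0 ≤ l (i : Fin (m+1))) ∧
  (∀ i : ℕ, 1 ≤ i → i ≤ m → l 0 < (i : ℚ) → l (i : Fin (m+1)) = 0)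

/-- `λ` is atypical (w.r.t. a given `ρ`): `⟨λ+ρ, δ+s·ε_i⟩ = 0` for some `1 ≤ i ≤ m`, `s = ±1`. -/
def Atyp (m : ℕ) (ρ l : Fin (m+1) → ℚ) : Prop :=
  ∃ i : ℕ, 1 ≤ i ∧ i ≤ m ∧ ∃ s : ℚ, (s = 1 ∨ s = -1) ∧
    form m (l + ρ) (eps m 0 + s • eps m i) = 0

abbrev GLQ (m : ℕ) := (Fin (m+1) → ℚ) ≃ₗ[ℚ] (Fin (m+1) → ℚ)

/-- Permutations of the coordinates `1, …, m` (fixing coordinate `0`). -/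
def permSet (m : ℕ) : Set (GLQ m) :=
  {w | ∃ σ : Equiv.Perm (Fin (m+1)), σ 0 = 0 ∧ ∀ v, w v = v ∘ σ}

/-- The sign change of coordinate `0`. -/
def flip0Set (m : ℕ) : Set (GLQ m) :=
  {w | ∀ v k, w v k = if k = 0 then -(v k) else v k}

/-- Simultaneous sign changes of two coordinates among `1, …, m`. -/
def doubleFlipSet (m : ℕ) : Set (GLQ m) :=
  {w | ∃ i j : Fin (m+1), i ≠ 0 ∧ j ≠ 0 ∧ i ≠ j ∧
    ∀ v k, w v k = if k = i ∨ k = j then -(v k) else v k}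

/-- Sign changes of a single coordinate among `1, …, m`. -/
def singleFlipSet (m : ℕ) : Set (GLQ m) :=
  {w | ∃ i : Fin (m+1), i ≠ 0 ∧ ∀ v k, w v k = if k = i then -(v k) else v k}

/-- The Weyl group for `osp(2m|2)`. -/
def WD (m : ℕ) : Subgroup (GLQ m) :=
  Subgroup.closure (permSet m ∪ doubleFlipSet m ∪ flip0Set m)

/-- The Weyl group for `osp(2m+1|2)`. -/
def WB (m : ℕ) : Subgroup (GLQ m) :=
  Subgroup.closure (permSet m ∪ singleFlipSet m ∪ flip0Set m)

/-- The block equivalence: the smallest equivalence relation with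
`μ ∼ μ+α` for odd roots `α = ±(δ±ε_i)` with `⟨μ+ρ, α⟩ = 0`, and
`μ ∼ w(μ+ρ)−ρ` for `w ∈ W`. -/
def blockRel (m : ℕ) (ρ : Fin (m+1) → ℚ) (W : Subgroup (GLQ m)) :
    (Fin (m+1) → ℚ) → (Fin (m+1) → ℚ) → Prop :=
  Relation.EqvGen (fun μ ν =>
    (∃ i : ℕ, 1 ≤ i ∧ i ≤ m ∧ ∃ s t : ℚ, (s = 1 ∨ s = -1) ∧ (t = 1 ∨ t = -1) ∧
      form m (μ + ρ) (t • (eps m 0 + s • eps m i)) = 0 ∧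
      ν = μ + t • (eps m 0 + s • eps m i)) ∨
    (∃ w ∈ W, ν = w (μ + ρ) - ρ))

def blockD (m : ℕ) : (Fin (m+1) → ℚ) → (Fin (m+1) → ℚ) → Prop :=
  blockRel m (rhoD m) (WD m)

def blockB (m : ℕ) : (Fin (m+1) → ℚ) → (Fin (m+1) → ℚ) → Prop :=
  blockRel m (rhoB m) (WB m)

/-- The set `𝒫_λ = 𝒫_{λ+} ∪ 𝒫_{λ−}` for `osp(2m|2)`. -/
noncomputable def PlamD (m : ℕ) (l : Fin (m+1) → ℚ) : Set (Fin (m+1) → ℚ) :=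
  {μ | PD m μ ∧
    (μ = l + eps m 0 ∨ μ = l - eps m 0 ∨
     (∃ i : ℕ, 1 ≤ i ∧ i ≤ m - 1 ∧ (μ = l + eps m i ∨ μ = l - eps m i)) ∨
     (0 ≤ l (m : Fin (m+1)) ∧ μ = l + eps m m) ∨
     (l (m : Fin (m+1)) ≤ 0 ∧ μ = l - eps m m) ∨
     (l (m : Fin (m+1)) < 0 ∧ μ = l + eps m m) ∨
     (0 < l (m : Fin (m+1)) ∧ μ = l - eps m m))}

/-- The set `𝒫_λ = 𝒫_{λ+} ∪ 𝒫_{λ−}` for `osp(2m+1|2)`. -/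
noncomputable def PlamB (m : ℕ) (l : Fin (m+1) → ℚ) : Set (Fin (m+1) → ℚ) :=
  {μ | PB m μ ∧
    ((∃ i : ℕ, i ≤ m ∧ (μ = l + eps m i ∨ μ = l - eps m i)) ∨
     (l (m : Fin (m+1)) ≠ 0 ∧ μ = l))}

/-- The weight `λ^{j,q}`. -/
noncomputable def lamJQ (m : ℕ) (l : Fin (m+1) → ℚ) (l0 j : ℕ) (q : ℤ) : Fin (m+1) → ℚ :=
  ((j : ℚ) - (q : ℚ)) • eps m 0 + (∑ i ∈ Finset.Icc 1 j, l (i : Fin (m+1)) • eps m i) +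
    (q : ℚ) • eps m (j + 1) +
    ∑ i ∈ Finset.Icc (j+1) l0, (l (i : Fin (m+1)) + 1) • eps m (i+1)

/-- The weight `λ^{j,q}_−`. -/
noncomputable def lamJQm (m : ℕ) (l : Fin (m+1) → ℚ) (l0 j : ℕ) (q : ℤ) : Fin (m+1) → ℚ :=
  ((j : ℚ) - (q : ℚ)) • eps m 0 + (∑ i ∈ Finset.Icc 1 j, l (i : Fin (m+1)) • eps m i) +
    (q : ℚ) • eps m (j + 1) +
    (∑ i ∈ Finset.Icc (j+1) (l0 - 1), (l (i : Fin (m+1)) + 1) • eps m (i+1)) -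
    (l (l0 : Fin (m+1)) + 1) • eps m (l0 + 1)

/-- `λ^δ` for `osp(2m|2)`: coordinate `0` becomes `2m−2−λ₀`. -/
noncomputable def deltaD (m : ℕ) (l : Fin (m+1) → ℚ) : Fin (m+1) → ℚ :=
  fun i => if i = 0 then 2*(m : ℚ) - 2 - l 0 else l i

/-- `λ^δ` for `osp(2m+1|2)`: coordinate `0` becomes `2m−1−λ₀`. -/
noncomputable def deltaB (m : ℕ) (l : Fin (m+1) → ℚ) : Fin (m+1) → ℚ :=
  fun i => if i = 0 then 2*(m : ℚ) - 1 - l 0 else l i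

section Aux

lemma finValCast {m i : ℕ} (h : i ≤ m) : ((i : Fin (m+1)) : ℕ) = i :=
  Fin.val_cast_of_lt (Nat.lt_succ_of_le h)

lemma fin_cast_eq_iff {m i : ℕ} (h : i ≤ m) (k : Fin (m+1)) :
    (k = (i : Fin (m+1))) ↔ ((k : ℕ) = i) := by
  rw [Fin.ext_iff, finValCast h]

lemma fin_cast_ne_zero {m i : ℕ} (h1 : 1 ≤ i) (h2 : i ≤ m) : (i : Fin (m+1)) ≠ 0 := by
  intro h
  have := congrArg Fin.val h
  rw [finValCast h2] at this
  simp at this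
  omega

lemma eps_apply {m : ℕ} (i : ℕ) (k : Fin (m+1)) :
    eps m i k = if k = (i : Fin (m+1)) then 1 else 0 := by
  rw [eps, Pi.single_apply]

lemma rhoB_zero (m : ℕ) : rhoB m 0 = 1/2 - m := if_pos rfl

lemma rhoB_cast {m i : ℕ} (h1 : 1 ≤ i) (h2 : i ≤ m) :
    rhoB m (i : Fin (m+1)) = (m : ℚ) - i + 1/2 := by
  rw [rhoB]
  rw [if_neg (fin_cast_ne_zero h1 h2), finValCast h2]

lemma form_smul (m : ℕ) (a b : Fin (m+1) → ℚ) (t : ℚ) :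
    form m a (t • b) = t * form m a b := by
  rw [form, form, mul_add, Finset.mul_sum]
  congr 1
  · simp only [Pi.smul_apply, smul_eq_mul]; ring
  · refine Finset.sum_congr rfl fun i _ => ?_
    rw [Pi.smul_apply, smul_eq_mul]
    split_ifs <;> ring

lemma form_eps (m : ℕ) (a : Fin (m+1) → ℚ) (i : ℕ) (h1 : 1 ≤ i) (h2 : i ≤ m) (s : ℚ) :
    form m a (eps m 0 + s • eps m i) = -(a 0) + s * a (i : Fin (m+1)) := by
  have hne : ((i : ℕ) : Fin (m+1)) ≠ 0 := fin_cast_ne_zero h1 h2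
  rw [form]
  have hb0 : (eps m 0 + s • eps m i) 0 = 1 := by
    rw [Pi.add_apply, Pi.smul_apply, eps_apply, eps_apply, smul_eq_mul,
      if_pos (by norm_num), if_neg (Ne.symm hne)]
    ring
  have hsum : ∀ i' : Fin (m+1), (if i' = 0 then (0:ℚ) else a i' * ((eps m 0 + s • eps m i) i'))
      = if i' = ((i:ℕ) : Fin (m+1)) then s * a i' else 0 := by
    intro i'
    rcases eq_or_ne i' 0 with h | h
    · rw [if_pos h, if_neg (by rw [h]; exact Ne.symm hne)]
    · rw [if_neg h, Pi.add_apply, Pi.smul_apply, eps_apply, eps_apply, smul_eq_mul]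
      rw [if_neg (by simpa using h)]
      split_ifs <;> ring
  rw [Finset.sum_congr rfl (fun i' _ => hsum i'),
    Finset.sum_ite_eq' Finset.univ ((i:ℕ) : Fin (m+1)) (fun i' => s * a i'),
    if_pos (Finset.mem_univ _), hb0]
  ring

lemma lamJQ_apply (m : ℕ) (l : Fin (m+1) → ℚ) (l0 j : ℕ) (q : ℤ)
    (hj : j ≤ l0) (hm2 : l0 + 1 ≤ m) (k : Fin (m+1)) :
    lamJQ m l l0 j q k =
      if (k : ℕ) = 0 then (j : ℚ) - (q : ℚ)
      else if (k : ℕ) ≤ j then l k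
      else if (k : ℕ) = j + 1 then (q : ℚ)
      else if (k : ℕ) ≤ l0 + 1 then l ((((k : ℕ) - 1 : ℕ)) : Fin (m+1)) + 1
      else 0 := by
  have hkm : (k : ℕ) ≤ m := Nat.lt_succ_iff.mp k.isLt
  rw [lamJQ]
  simp only [Pi.add_apply, Finset.sum_apply, Pi.smul_apply, smul_eq_mul, eps_apply]
  have e1 : ∀ i ∈ Finset.Icc 1 j,
      l (i : Fin (m+1)) * (if k = (i : Fin (m+1)) then (1:ℚ) else 0)
      = if (k:ℕ) = i then l (i : Fin (m+1)) else 0 := by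
    intro i hi
    simp only [Finset.mem_Icc] at hi
    simp only [fin_cast_eq_iff (show i ≤ m by omega) k]
    split_ifs <;> ring
  have e2 : ∀ i ∈ Finset.Icc (j+1) l0,
      (l (i : Fin (m+1)) + 1) * (if k = ((i+1 : ℕ) : Fin (m+1)) then (1:ℚ) else 0)
      = if (k:ℕ) = i + 1 then l (i : Fin (m+1)) + 1 else 0 := by
    intro i hi
    simp only [Finset.mem_Icc] at hi
    simp only [fin_cast_eq_iff (show i + 1 ≤ m by omega) k]
    split_ifs <;> ring
  rw [Finset.sum_congr rfl e1, Finset.sum_congr rfl e2, Finset.sum_ite_eq]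
  have e3 : (∑ i ∈ Finset.Icc (j+1) l0, if (k:ℕ) = i + 1 then l (i : Fin (m+1)) + 1 else 0)
      = if j + 2 ≤ (k:ℕ) ∧ (k:ℕ) ≤ l0 + 1 then l ((((k:ℕ) - 1 : ℕ)) : Fin (m+1)) + 1 else 0 := by
    split_ifs with hc
    · rw [Finset.sum_eq_single ((k:ℕ) - 1)]
      · rw [if_pos (by omega)]
      · intro b hb hne
        simp only [Finset.mem_Icc] at hb
        rw [if_neg (by omega)]
      · intro hna
        exfalso
        exact hna (by simp only [Finset.mem_Icc]; omega)
    · apply Finset.sum_eq_zero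
      intro i hi
      simp only [Finset.mem_Icc] at hi
      rw [if_neg (by omega)]
  rw [e3]
  simp only [fin_cast_eq_iff (Nat.zero_le m) k, fin_cast_eq_iff (show j+1 ≤ m by omega) k,
    Finset.mem_Icc, Fin.cast_val_eq_self]
  split_ifs <;> first | (exfalso; omega) | ring

end Aux

section Steps

lemma lamJQ_q_minus (m : ℕ) (l : Fin (m+1) → ℚ) (l0 j : ℕ) (q : ℤ) :
    lamJQ m l l0 j (q - 1)
      = lamJQ m l l0 j q + (1:ℚ) • (eps m 0 + (-1 : ℚ) • eps m (j+1)) := by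
  unfold lamJQ
  push_cast
  module

lemma lamJQ_q_plus (m : ℕ) (l : Fin (m+1) → ℚ) (l0 j : ℕ) (q : ℤ) :
    lamJQ m l l0 j (q + 1)
      = lamJQ m l l0 j q + (-1:ℚ) • (eps m 0 + (-1 : ℚ) • eps m (j+1)) := by
  unfold lamJQ
  push_cast
  module

lemma lamJQ_form (m : ℕ) (l : Fin (m+1) → ℚ) (l0 j : ℕ) (q : ℤ)
    (hj : j ≤ l0) (hm2 : l0 + 1 ≤ m) (t : ℚ) :
    form m (lamJQ m l l0 j q + rhoB m) (t • (eps m 0 + (-1:ℚ) • eps m (j+1))) = 0 := by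
  have ha0 : (lamJQ m l l0 j q + rhoB m) 0 = ((j:ℚ) - (q:ℚ)) + (1/2 - (m:ℚ)) := by
    rw [Pi.add_apply, lamJQ_apply m l l0 j q hj hm2 0, rhoB_zero]
    norm_num
  have ha1 : (lamJQ m l l0 j q + rhoB m) ((j+1 : ℕ) : Fin (m+1))
      = (q:ℚ) + ((m:ℚ) - ((j+1 : ℕ) : ℚ) + 1/2) := by
    rw [Pi.add_apply, lamJQ_apply m l l0 j q hj hm2 _,
      rhoB_cast (show 1 ≤ j+1 by omega) (show j+1 ≤ m by omega)]
    rw [finValCast (show j+1 ≤ m by omega)]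
    rw [if_neg (by omega), if_neg (by omega), if_pos rfl]
  rw [form_smul, form_eps m _ (j+1) (by omega) (by omega), ha0, ha1]
  push_cast
  ring

lemma blockB_q_step (m : ℕ) (L l : Fin (m+1) → ℚ) (l0 j : ℕ) (q : ℤ)
    (hj : j ≤ l0) (hm2 : l0 + 1 ≤ m)
    (h : blockB m L (lamJQ m l l0 j q)) :
    blockB m L (lamJQ m l l0 j (q+1)) ∧ blockB m L (lamJQ m l l0 j (q-1)) := by
  constructor
  · refine Relation.EqvGen.trans _ _ _ h (Relation.EqvGen.rel _ _ (Or.inl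
      ⟨j+1, by omega, by omega, -1, -1, Or.inr rfl, Or.inr rfl,
        lamJQ_form m l l0 j q hj hm2 (-1), lamJQ_q_plus m l l0 j q⟩))
  · refine Relation.EqvGen.trans _ _ _ h (Relation.EqvGen.rel _ _ (Or.inl
      ⟨j+1, by omega, by omega, -1, 1, Or.inr rfl, Or.inl rfl,
        lamJQ_form m l l0 j q hj hm2 1, lamJQ_q_minus m l l0 j q⟩))

lemma weyl_step (m : ℕ) (l : Fin (m+1) → ℚ) (l0 j : ℕ) (q : ℤ)
    (hj : j + 1 ≤ l0) (hm2 : l0 + 1 ≤ m) :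
    ∃ w ∈ WB m,
      lamJQ m l l0 j q = w (lamJQ m l l0 (j+1) (q+1) + rhoB m) - rhoB m := by
  have hma : j + 1 ≤ m := by omega
  have hmb : j + 2 ≤ m := by omega
  have hav : (((j+1 : ℕ) : Fin (m+1)) : ℕ) = j + 1 := finValCast hma
  have hbv : (((j+2 : ℕ) : Fin (m+1)) : ℕ) = j + 2 := finValCast hmb
  have ha0 : ((j+1 : ℕ) : Fin (m+1)) ≠ 0 := fin_cast_ne_zero (by omega) hma
  have hb0 : ((j+2 : ℕ) : Fin (m+1)) ≠ 0 := fin_cast_ne_zero (by omega) hmb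
  refine ⟨LinearEquiv.funCongrLeft ℚ ℚ
      (Equiv.swap ((j+1 : ℕ) : Fin (m+1)) ((j+2 : ℕ) : Fin (m+1))), ?_, ?_⟩
  · apply Subgroup.subset_closure
    left; left
    exact ⟨Equiv.swap ((j+1 : ℕ) : Fin (m+1)) ((j+2 : ℕ) : Fin (m+1)),
      Equiv.swap_apply_of_ne_of_ne (Ne.symm ha0) (Ne.symm hb0), fun v => rfl⟩
  · funext k
    have hkm : (k : ℕ) ≤ m := Nat.lt_succ_iff.mp k.isLt
    have happ : (LinearEquiv.funCongrLeft ℚ ℚ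
        (Equiv.swap ((j+1 : ℕ) : Fin (m+1)) ((j+2 : ℕ) : Fin (m+1))))
        (lamJQ m l l0 (j+1) (q+1) + rhoB m) k
        = (lamJQ m l l0 (j+1) (q+1) + rhoB m)
            (Equiv.swap ((j+1 : ℕ) : Fin (m+1)) ((j+2 : ℕ) : Fin (m+1)) k) := rfl
    rw [Pi.sub_apply, happ]
    have e21 : j + 2 - 1 = j + 1 := by omega
    rcases eq_or_ne k ((j+1 : ℕ) : Fin (m+1)) with hka | hka
    · rw [hka, Equiv.swap_apply_left, Pi.add_apply,
        lamJQ_apply m l l0 (j+1) (q+1) hj hm2 _,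
        lamJQ_apply m l l0 j q (by omega) hm2 _,
        rhoB_cast (show 1 ≤ j+2 by omega) hmb,
        rhoB_cast (show 1 ≤ j+1 by omega) hma]
      simp only [hav, hbv, e21, Nat.add_sub_cancel]
      split_ifs <;> first | (exfalso; first | omega | tauto) | (push_cast; ring)
    · rcases eq_or_ne k ((j+2 : ℕ) : Fin (m+1)) with hkb | hkb
      · rw [hkb, Equiv.swap_apply_right, Pi.add_apply,
          lamJQ_apply m l l0 (j+1) (q+1) hj hm2 _,
          lamJQ_apply m l l0 j q (by omega) hm2 _,
          rhoB_cast (show 1 ≤ j+1 by omega) hma,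
          rhoB_cast (show 1 ≤ j+2 by omega) hmb]
        simp only [hav, hbv, e21, Nat.add_sub_cancel]
        split_ifs <;> first | (exfalso; first | omega | tauto) | (push_cast; ring)
      · rw [Equiv.swap_apply_of_ne_of_ne hka hkb, Pi.add_apply,
          lamJQ_apply m l l0 (j+1) (q+1) hj hm2 k,
          lamJQ_apply m l l0 j q (by omega) hm2 k]
        have hv1 : (k : ℕ) ≠ j + 1 := fun h => hka (Fin.ext (by rw [hav]; exact h))
        have hv2 : (k : ℕ) ≠ j + 2 := fun h => hkb (Fin.ext (by rw [hbv]; exact h))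
        split_ifs <;> first | (exfalso; first | omega | tauto) | (push_cast; ring)

end Steps

theorem lemma51_B' (m : ℕ) (hm : 1 ≤ m) (l : Fin (m+1) → ℚ) (hP : PB m l)
    (l0 : ℕ) (hl0 : (l0 : ℚ) = l 0) (hle : l 0 ≤ (m : ℚ) - 1) :
    ∀ j : ℕ, j ≤ l0 → ∀ q : ℤ, blockB m l (lamJQ m l l0 j q) := by
  have hm2 : l0 + 1 ≤ m := by
    have h1 : (l0:ℚ) + 1 ≤ (m:ℚ) := by rw [hl0]; linarith
    exact_mod_cast h1
  have hzero : ∀ k : Fin (m+1), l0 < (k:ℕ) → l k = 0 := by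
    intro k hk
    have hkm : (k:ℕ) ≤ m := Nat.lt_succ_iff.mp k.isLt
    have h := hP.2.2.2.2 (k:ℕ) (by omega) hkm
      (by rw [← hl0]; exact_mod_cast hk)
    rwa [Fin.cast_val_eq_self] at h
  have hbase : lamJQ m l l0 l0 0 = l := by
    funext k
    rw [lamJQ_apply m l l0 l0 0 le_rfl hm2 k]
    split_ifs with h1 h2 h3 h4
    · have hk0 : k = 0 := Fin.ext (by simpa using h1)
      rw [hk0, ← hl0]
      norm_num
    · rfl
    · rw [hzero k (by omega)]
      norm_num
    · exfalso; omega
    · exact (hzero k (by omega)).symm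
  -- all q at a given j, from one q
  have q_all : ∀ j : ℕ, j ≤ l0 → ∀ q0 : ℤ, blockB m l (lamJQ m l l0 j q0) →
      ∀ q : ℤ, blockB m l (lamJQ m l l0 j q) := by
    intro j hj q0 h0 q
    have key : ∀ d : ℤ, blockB m l (lamJQ m l l0 j (q0 + d)) := by
      intro d
      induction d using Int.induction_on with
      | zero => simpa using h0
      | succ n ih =>
          have := (blockB_q_step m l l l0 j (q0 + n) hj hm2 ih).1
          have e : q0 + ((n:ℤ) + 1) = (q0 + n) + 1 := by ring
          rwa [e]
      | pred n ih =>
          have := (blockB_q_step m l l l0 j (q0 + (-(n:ℤ))) hj hm2 ih).2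
          have e : q0 + (-(n:ℤ) - 1) = (q0 + (-(n:ℤ))) - 1 := by ring
          rwa [e]
    have := key (q - q0)
    rwa [show q0 + (q - q0) = q by ring] at this
  have main : ∀ d : ℕ, d ≤ l0 → ∀ q : ℤ, blockB m l (lamJQ m l l0 (l0 - d) q) := by
    intro d
    induction d with
    | zero =>
        intro _ q
        refine q_all l0 le_rfl 0 ?_ q
        rw [hbase]
        exact Relation.EqvGen.refl l
    | succ d ih =>
        intro hd q
        have hjj : l0 - (d+1) + 1 = l0 - d := by omega
        obtain ⟨w, hw, heq⟩ := weyl_step m l l0 (l0 - (d+1)) q (by omega) hm2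
        rw [hjj] at heq
        have h1 : blockB m l (lamJQ m l l0 (l0 - d) (q+1)) := ih (by omega) (q+1)
        exact Relation.EqvGen.trans _ _ _ h1
          (Relation.EqvGen.rel _ _ (Or.inr ⟨w, hw, heq⟩))
  intro j hj q
  have := main (l0 - j) (by omega) q
  rwa [show l0 - (l0 - j) = j by omega] at this

/-- Lemma 5.1 for `osp(2m+1|2)`: if `λ ∈ 𝒫` with `λ₀ ≤ m−1` then `λ ∼ λ^{j,q}`
for all `0 ≤ j ≤ λ₀`, `q ∈ ℤ`. -/
theorem lemma51_B (m : ℕ) (hm : 1 ≤ m) (l : Fin (m+1) → ℚ) (hP : PB m l)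
    (l0 : ℕ) (hl0 : (l0 : ℚ) = l 0) (hle : l 0 ≤ (m : ℚ) - 1) :
    ∀ j : ℕ, j ≤ l0 → ∀ q : ℤ, blockB m l (lamJQ m l l0 j q) := by
  exact lemma51_B' m hm l hP l0 hl0 hle
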